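/- For any d ∈ ℕ and any k with 2 ≤ k ≤ d, the soft-max matrices satisfy the recursion SM_{(k−1, d)} = SM_{(k, d)} · (I + E_{k,1} − E_{k,k}), where I is the d×d identity matrix and E_{i,j} is the d×d matrix with a single 1 in entry (i, j) and zeros elsewhere. -/

import Mathlib

open Finset

noncomputable def SM (k d : ℕ) : Matrix (Fin d) (Fin d) ℝ :=
  Matrix.of fun i j =>
    if k < (i : ℕ) + 1 ∨ k < (j : ℕ) + 1 then 0
    else if (i : ℕ) + 1 = 1 ∧ (j : ℕ) + 1 = 1 then ((k : ℝ) - 1) / k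
    else if (i : ℕ) = (j : ℕ) then 1 / ((i : ℕ) + 1 : ℝ)
    else if (j : ℕ) + 1 = 1 then -1 / (k : ℝ)
    else if (i : ℕ) < (j : ℕ) then
      -1 / ((((j : ℕ) + 1 : ℕ) : ℝ) * (((j : ℕ) + 1 : ℝ) - 1))
    else 0

set_option maxHeartbeats 1000000 in
theorem SM_recursion (d k : ℕ) (hk : 2 ≤ k) (hkd : k ≤ d) :
    SM (k - 1) d =
      SM k d *
        (1 + Matrix.single (⟨k - 1, by omega⟩ : Fin d) (⟨0, by omega⟩ : Fin d) (1 : ℝ)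
           - Matrix.single (⟨k - 1, by omega⟩ : Fin d) (⟨k - 1, by omega⟩ : Fin d)
               (1 : ℝ)) := by
  have hk0 : (k : ℝ) ≠ 0 := by positivity
  have hk2 : (2:ℝ) ≤ (k:ℝ) := by exact_mod_cast hk
  have hk1 : (k : ℝ) - 1 ≠ 0 := by nlinarith
  have hc : ((k - 1 : ℕ) : ℝ) = (k : ℝ) - 1 := by
    exact_mod_cast Nat.cast_sub (by omega : 1 ≤ k)
  have hc2 : ((k - 1 + 1 : ℕ) : ℝ) = (k : ℝ) := by
    have : k - 1 + 1 = k := by omega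
    rw [this]
  ext i j
  rw [Matrix.mul_sub, Matrix.mul_add, Matrix.mul_one, Matrix.sub_apply, Matrix.add_apply]
  by_cases hj0 : (j : ℕ) = 0
  · have hjeq : j = (⟨0, by omega⟩ : Fin d) := Fin.ext hj0
    rw [hjeq]
    rw [Matrix.mul_single_apply_same,
        Matrix.mul_single_apply_of_ne (hbj := by
          simp only [ne_eq, Fin.mk.injEq]; omega)]
    by_cases hi0 : (i : ℕ) = 0
    · have e1 : SM (k - 1) d i (⟨0, by omega⟩ : Fin d) = (((k-1:ℕ):ℝ) - 1) / ((k-1:ℕ):ℝ) := by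
        simp only [SM, Matrix.of_apply, Fin.val_mk]
        split_ifs <;> first | rfl | (exfalso; omega) | (exfalso; simp_all only [and_true, true_and, not_true, not_and]; try omega)
      have e2 : SM k d i (⟨0, by omega⟩ : Fin d) = ((k:ℝ) - 1) / (k:ℝ) := by
        simp only [SM, Matrix.of_apply, Fin.val_mk]
        split_ifs <;> first | rfl | (exfalso; omega) | (exfalso; simp_all only [and_true, true_and, not_true, not_and]; try omega)
      have e3 : SM k d i (⟨k - 1, by omega⟩ : Fin d) =
          -1 / (((k - 1 + 1 : ℕ):ℝ) * (((k-1:ℕ):ℝ) + 1 - 1)) := by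
        simp only [SM, Matrix.of_apply, Fin.val_mk]
        split_ifs <;> first | rfl | (exfalso; omega) | (exfalso; simp_all only [and_true, true_and, not_true, not_and]; try omega)
      rw [e1, e2, e3, hc, hc2]
      simp only [sub_add_cancel]
      field_simp
      ring
    · by_cases hieq : (i : ℕ) = k - 1
      · have hir : ((i : ℕ) : ℝ) = (k : ℝ) - 1 := by rw [hieq, hc]
        have e1 : SM (k - 1) d i (⟨0, by omega⟩ : Fin d) = 0 := by
          simp only [SM, Matrix.of_apply, Fin.val_mk]
          split_ifs <;> first | rfl | (exfalso; omega) | (exfalso; simp_all only [and_true, true_and, not_true, not_and]; try omega)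
        have e2 : SM k d i (⟨0, by omega⟩ : Fin d) = -1 / (k : ℝ) := by
          simp only [SM, Matrix.of_apply, Fin.val_mk]
          split_ifs <;> first | rfl | (exfalso; omega) | (exfalso; simp_all only [and_true, true_and, not_true, not_and]; try omega)
        have e3 : SM k d i (⟨k - 1, by omega⟩ : Fin d) = 1 / (((i:ℕ):ℝ) + 1) := by
          simp only [SM, Matrix.of_apply, Fin.val_mk]
          split_ifs <;> first | rfl | (exfalso; omega) | (exfalso; simp_all only [and_true, true_and, not_true, not_and]; try omega)
        rw [e1, e2, e3, hir]
        simp only [sub_add_cancel]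
        field_simp
        ring
      · by_cases hilt : (i : ℕ) < k - 1
        · have e1 : SM (k - 1) d i (⟨0, by omega⟩ : Fin d) = -1 / ((k-1:ℕ):ℝ) := by
            simp only [SM, Matrix.of_apply, Fin.val_mk]
            split_ifs <;> first | rfl | (exfalso; omega) | (exfalso; simp_all only [and_true, true_and, not_true, not_and]; try omega)
          have e2 : SM k d i (⟨0, by omega⟩ : Fin d) = -1 / (k : ℝ) := by
            simp only [SM, Matrix.of_apply, Fin.val_mk]
            split_ifs <;> first | rfl | (exfalso; omega) | (exfalso; simp_all only [and_true, true_and, not_true, not_and]; try omega)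
          have e3 : SM k d i (⟨k - 1, by omega⟩ : Fin d) =
              -1 / (((k - 1 + 1 : ℕ):ℝ) * (((k-1:ℕ):ℝ) + 1 - 1)) := by
            simp only [SM, Matrix.of_apply, Fin.val_mk]
            split_ifs <;> first | rfl | (exfalso; omega) | (exfalso; simp_all only [and_true, true_and, not_true, not_and]; try omega)
          rw [e1, e2, e3, hc, hc2]
          simp only [sub_add_cancel]
          field_simp
          ring
        · -- i ≥ k
          have e1 : SM (k - 1) d i (⟨0, by omega⟩ : Fin d) = 0 := by
            simp only [SM, Matrix.of_apply, Fin.val_mk]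
            split_ifs <;> first | rfl | (exfalso; omega) | (exfalso; simp_all only [and_true, true_and, not_true, not_and]; try omega)
          have e2 : SM k d i (⟨0, by omega⟩ : Fin d) = 0 := by
            simp only [SM, Matrix.of_apply, Fin.val_mk]
            split_ifs <;> first | rfl | (exfalso; omega) | (exfalso; simp_all only [and_true, true_and, not_true, not_and]; try omega)
          have e3 : SM k d i (⟨k - 1, by omega⟩ : Fin d) = 0 := by
            simp only [SM, Matrix.of_apply, Fin.val_mk]
            split_ifs <;> first | rfl | (exfalso; omega) | (exfalso; simp_all only [and_true, true_and, not_true, not_and]; try omega)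
          rw [e1, e2, e3]
          ring
  · by_cases hjk : (j : ℕ) = k - 1
    · have hjeq : j = (⟨k - 1, by omega⟩ : Fin d) := Fin.ext hjk
      rw [hjeq]
      rw [Matrix.mul_single_apply_same,
          Matrix.mul_single_apply_of_ne (hbj := by
            simp only [ne_eq, Fin.mk.injEq]; omega)]
      have h0 : SM (k - 1) d i (⟨k - 1, by omega⟩ : Fin d) = 0 := by
        simp only [SM, Matrix.of_apply, Fin.val_mk]
        split_ifs <;> first | rfl | (exfalso; omega) | (exfalso; simp_all only [and_true, true_and, not_true, not_and]; try omega)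
      rw [h0]; ring
    · rw [Matrix.mul_single_apply_of_ne
            (hbj := fun h => hj0 (by rw [h])),
          Matrix.mul_single_apply_of_ne
            (hbj := fun h => hjk (by rw [h]))]
      simp only [SM, Matrix.of_apply]
      split_ifs <;>
        first
          | (exfalso; omega)
          | ring
          | rfl
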